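/- Over an arbitrary field K, every T-ideal of the free bicommutative algebra F of countable rank is finitely generated as a T-ideal; consequently every variety of bicommutative algebras over K is defined by finitely many polynomial identities (the Specht property holds for bicommutative algebras). -/

import Mathlib

open MvPolynomial

variable (K : Type) [Field K] (ι : Type)

/-- The ideal of the polynomial ring `K[Y,Z]` (variables `y_i = X (inl i)`,
`z_j = X (inr j)`) generated by the products `y_i * z_j`; its underlying `K`-vector
space is spanned by the monomials `Y^α Z^β` with `|α| > 0` and `|β| > 0`. -/
noncomputable def Vid : Ideal (MvPolynomial (ι ⊕ ι) K) :=
  Ideal.span {p | ∃ i j, p = X (Sum.inl i) * X (Sum.inr j)}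

/-- The linear polynomial `∑ a_i y_i`. -/
noncomputable def Yp (a : ι →₀ K) : MvPolynomial (ι ⊕ ι) K :=
  a.sum fun i c => C c * X (Sum.inl i)

/-- The linear polynomial `∑ b_j z_j`. -/
noncomputable def Zp (b : ι →₀ K) : MvPolynomial (ι ⊕ ι) K :=
  b.sum fun j c => C c * X (Sum.inr j)

/-- The model `G` of the free bicommutative algebra with generators `x_i` indexed
by `ι`: its elements are pairs (linear part in the `x_i`'s, element of the span of
the `v_{α,β} = Y^α Z^β`). -/
abbrev GA : Type := (ι →₀ K) × (Vid K ι)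

lemma mul_mem_Vid (a b : ι →₀ K) (p q : MvPolynomial (ι ⊕ ι) K)
    (hp : p ∈ Vid K ι) (hq : q ∈ Vid K ι) :
    (Yp K ι a + p) * (Zp K ι b + q) ∈ Vid K ι := by
  have hYZ : Yp K ι a * Zp K ι b ∈ Vid K ι := by
    rw [Yp, Zp, Finsupp.sum, Finsupp.sum, Finset.sum_mul_sum]
    refine Submodule.sum_mem _ fun i _ => Submodule.sum_mem _ fun j _ => ?_
    have h : (C (a i) * X (Sum.inl i)) * (C (b j) * X (Sum.inr j))
        = (C (a i) * C (b j)) * (X (Sum.inl i) * X (Sum.inr j) :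
          MvPolynomial (ι ⊕ ι) K) := by ring
    rw [h]
    exact Ideal.mul_mem_left _ _ (Ideal.subset_span ⟨i, j, rfl⟩)
  have e : (Yp K ι a + p) * (Zp K ι b + q)
      = Yp K ι a * Zp K ι b + (Yp K ι a * q + (p * Zp K ι b + p * q)) := by ring
  rw [e]
  exact add_mem hYZ (add_mem (Ideal.mul_mem_left _ _ hq)
    (add_mem (Ideal.mul_mem_right _ _ hp) (Ideal.mul_mem_left _ _ hq)))

/-- The multiplication of `G`: `x_i ∘ x_j = y_i z_j`, `x_i ∘ v_{α,β} = v_{α+ε_i,β}`,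
`v_{α,β} ∘ x_j = v_{α,β+ε_j}`, `v_{α,β} ∘ v_{γ,δ} = v_{α+γ,β+δ}`, extended bilinearly. -/
noncomputable instance : Mul (GA K ι) :=
  ⟨fun u v => (0, ⟨(Yp K ι u.1 + (u.2 : MvPolynomial (ι ⊕ ι) K)) *
      (Zp K ι v.1 + (v.2 : MvPolynomial (ι ⊕ ι) K)),
    mul_mem_Vid K ι u.1 v.1 _ _ u.2.2 v.2.2⟩)⟩

/-- The generator `x_i` of `G`. -/
noncomputable def xE (i : ι) : GA K ι := (Finsupp.single i 1, 0)

/-- The basis element `v_{α,β}` of `G²`, as a predicate on elements of `G`. -/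
def IsVElem (w : GA K ι) (α β : ι →₀ ℕ) : Prop :=
  w.1 = 0 ∧ (w.2 : MvPolynomial (ι ⊕ ι) K) = monomial (Finsupp.sumElim α β) 1

/-- The square `G²` of `G`: the linear span of all products. -/
noncomputable def Gsq : Submodule K (GA K ι) := Submodule.span K {w | ∃ u v : GA K ι, w = u * v}

/-- Two-sided ideals of the (nonassociative) algebra `G`: `K`-subspaces absorbing
multiplication on both sides. -/
def IsTwoSidedIdeal (I : Submodule K (GA K ι)) : Prop :=
  ∀ (a : GA K ι), ∀ x ∈ I, a * x ∈ I ∧ x * a ∈ I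

/-- A T-ideal of the free bicommutative algebra `F ≅ G` of countable rank: a
two-sided ideal invariant under all (`K`-linear, multiplicative) endomorphisms. -/
def IsTIdeal (I : Submodule K (GA K ℕ)) : Prop :=
  IsTwoSidedIdeal K ℕ I ∧
  ∀ e : GA K ℕ →ₗ[K] GA K ℕ, (∀ a b : GA K ℕ, e (a * b) = e a * e b) →
    ∀ x ∈ I, e x ∈ I

/-- The T-ideal generated by a set: the smallest T-ideal containing it. -/
noncomputable def TIdealGen (T : Set (GA K ℕ)) : Submodule K (GA K ℕ) :=
  sInf {I : Submodule K (GA K ℕ) | IsTIdeal K I ∧ T ⊆ ↑I}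


namespace SpechtAux


abbrev Mo := (ℕ ⊕ ℕ) →₀ ℕ

/-! ### An ordinal-like well-order on monomials -/

def ordS : ℕ ⊕ ℕ → ℕ := Sum.elim (fun i => 2 * i) (fun i => 2 * i + 1)

lemma ordS_inj : Function.Injective ordS := by
  rintro (a | a) (b | b) h <;>
    simp only [ordS, Sum.elim_inl, Sum.elim_inr] at h
  · exact congrArg Sum.inl (by omega)
  · omega
  · omega
  · exact congrArg Sum.inr (by omega)

def rOrd : ℕ ⊕ ℕ → ℕ ⊕ ℕ → Prop := fun a b => ordS b < ordS a

instance : IsTrichotomous (ℕ ⊕ ℕ) rOrd :=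
  ⟨fun a b => by
    intro h1 h2
    rcases lt_trichotomy (ordS a) (ordS b) with h | h | h
    · exact absurd h h2
    · exact ordS_inj h
    · exact absurd h h1⟩

def mlt : Mo → Mo → Prop := Finsupp.Lex rOrd (· < ·)

lemma mlt_wf : WellFounded mlt :=
  Finsupp.Lex.wellFounded' (fun n => Nat.not_lt_zero n)
    (wellFounded_lt : WellFounded ((· < ·) : ℕ → ℕ → Prop))
    (InvImage.wf ordS (wellFounded_lt : WellFounded ((· < ·) : ℕ → ℕ → Prop)))

lemma mlt_iff {a b : Mo} :
    mlt a b ↔ ∃ j, (∀ d, ordS j < ordS d → a d = b d) ∧ a j < b j := Iff.rfl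

lemma mlt_trans {a b c : Mo} (h1 : mlt a b) (h2 : mlt b c) : mlt a c := by
  obtain ⟨j1, hj1, hlt1⟩ := mlt_iff.mp h1
  obtain ⟨j2, hj2, hlt2⟩ := mlt_iff.mp h2
  rcases lt_trichotomy (ordS j1) (ordS j2) with h | h | h
  · exact mlt_iff.mpr ⟨j2, fun d hd => (hj1 d (h.trans hd)).trans (hj2 d hd),
      by rw [hj1 j2 h]; exact hlt2⟩
  · cases ordS_inj h
    exact mlt_iff.mpr ⟨j1, fun d hd => (hj1 d hd).trans (hj2 d hd), hlt1.trans hlt2⟩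
  · exact mlt_iff.mpr ⟨j1, fun d hd => (hj1 d hd).trans (hj2 d (h.trans hd)),
      by rw [← hj2 j1 h]; exact hlt1⟩

lemma mlt_add_left (μ : Mo) {a b : Mo} (h : mlt a b) : mlt (μ + a) (μ + b) := by
  obtain ⟨j, hj, hlt⟩ := mlt_iff.mp h
  refine mlt_iff.mpr ⟨j, fun d hd => ?_, ?_⟩
  · simp only [Finsupp.add_apply, hj d hd]
  · simp only [Finsupp.add_apply]
    omega

lemma mlt_tri (a b : Mo) : a = b ∨ mlt a b ∨ mlt b a := by
  classical
  by_cases h : a = b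
  · exact Or.inl h
  have hne : ∃ d, a d ≠ b d := by
    by_contra hcon
    push_neg at hcon
    exact h (Finsupp.ext hcon)
  set S := (a.support ∪ b.support).filter (fun d => a d ≠ b d) with hSdef
  have hSne : S.Nonempty := by
    obtain ⟨d, hd⟩ := hne
    refine ⟨d, Finset.mem_filter.mpr ⟨?_, hd⟩⟩
    by_cases ha : a d = 0
    · exact Finset.mem_union_right _ (Finsupp.mem_support_iff.mpr
        (fun hb => hd (ha.trans hb.symm)))
    · exact Finset.mem_union_left _ (Finsupp.mem_support_iff.mpr ha)
  obtain ⟨j, hjS, hmax⟩ := Finset.exists_max_image S ordS hSne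
  have hagree : ∀ d, ordS j < ordS d → a d = b d := by
    intro d hd
    by_contra hcon
    have hdS : d ∈ S := by
      refine Finset.mem_filter.mpr ⟨?_, hcon⟩
      by_cases ha : a d = 0
      · exact Finset.mem_union_right _ (Finsupp.mem_support_iff.mpr
          (fun hb => hcon (ha.trans hb.symm)))
      · exact Finset.mem_union_left _ (Finsupp.mem_support_iff.mpr ha)
    exact absurd (hmax d hdS) (not_le.mpr hd)
  have hj : a j ≠ b j := (Finset.mem_filter.mp hjS).2
  rcases lt_or_gt_of_ne hj with h' | h'
  · exact Or.inr (Or.inl (mlt_iff.mpr ⟨j, hagree, h'⟩))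
  · exact Or.inr (Or.inr (mlt_iff.mpr ⟨j, fun d hd => (hagree d hd).symm, h'⟩))

lemma exists_mlt_max : ∀ s : Finset Mo, s.Nonempty → ∃ m ∈ s, ∀ a ∈ s, a ≠ m → mlt a m := by
  classical
  intro s
  induction s using Finset.induction_on with
  | empty => intro h; exact absurd rfl h.ne_empty
  | @insert a s ha ih =>
    intro _
    rcases s.eq_empty_or_nonempty with rfl | hs
    · refine ⟨a, Finset.mem_insert_self _ _, fun x hx hxa => ?_⟩
      rcases Finset.mem_insert.mp hx with rfl | hx'
      · exact absurd rfl hxa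
      · exact absurd hx' (Finset.notMem_empty x)
    · obtain ⟨m, hm, hmax⟩ := ih hs
      rcases mlt_tri a m with heq | ham | hma
      · refine ⟨m, Finset.mem_insert_of_mem hm, fun x hx hxm => ?_⟩
        rcases Finset.mem_insert.mp hx with rfl | hx'
        · exact absurd heq hxm
        · exact hmax x hx' hxm
      · refine ⟨m, Finset.mem_insert_of_mem hm, fun x hx hxm => ?_⟩
        rcases Finset.mem_insert.mp hx with rfl | hx'
        · exact ham
        · exact hmax x hx' hxm
      · refine ⟨a, Finset.mem_insert_self _ _, fun x hx hxa => ?_⟩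
        rcases Finset.mem_insert.mp hx with rfl | hx'
        · exact absurd rfl hxa
        · by_cases hxm : x = m
          · rw [hxm]; exact hma
          · exact mlt_trans (hmax x hx' hxm) hma

/-! ### Renaming along a strictly monotone map -/

lemma sumMap_inj {θ : ℕ → ℕ} (hθ : Function.Injective θ) :
    Function.Injective (Sum.map θ θ) := by
  rintro (a | a) (b | b) h
  · simp only [Sum.map_inl, Sum.inl.injEq] at h
    exact congrArg _ (hθ h)
  · exact absurd h (by simp)
  · exact absurd h (by simp)
  · simp only [Sum.map_inr, Sum.inr.injEq] at h
    exact congrArg _ (hθ h)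

lemma ordS_sumMap_lt {θ : ℕ → ℕ} (hθ : StrictMono θ) (s t : ℕ ⊕ ℕ) :
    ordS (Sum.map θ θ s) < ordS (Sum.map θ θ t) ↔ ordS s < ordS t := by
  rcases s with i | i <;> rcases t with j | j <;>
    simp only [Sum.map_inl, Sum.map_inr, ordS, Sum.elim_inl, Sum.elim_inr]
  · constructor
    · intro h; have : θ i < θ j := by omega
      have := hθ.lt_iff_lt.mp this; omega
    · intro h; have : i < j := by omega
      have := hθ.lt_iff_lt.mpr this; omega
  · constructor
    · intro h; have : θ i ≤ θ j := by omega
      have := hθ.le_iff_le.mp this; omega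
    · intro h; have : i ≤ j := by omega
      have := hθ.le_iff_le.mpr this; omega
  · constructor
    · intro h; have : θ i < θ j := by omega
      have := hθ.lt_iff_lt.mp this; omega
    · intro h; have : i < j := by omega
      have := hθ.lt_iff_lt.mpr this; omega
  · constructor
    · intro h; have : θ i < θ j := by omega
      have := hθ.lt_iff_lt.mp this; omega
    · intro h; have : i < j := by omega
      have := hθ.lt_iff_lt.mpr this; omega

lemma mlt_mapDomain {θ : ℕ → ℕ} (hθ : StrictMono θ) {a b : Mo} (h : mlt a b) :
    mlt (Finsupp.mapDomain (Sum.map θ θ) a) (Finsupp.mapDomain (Sum.map θ θ) b) := by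
  classical
  obtain ⟨j, hj, hlt⟩ := mlt_iff.mp h
  have hinj := sumMap_inj hθ.injective
  refine mlt_iff.mpr ⟨Sum.map θ θ j, ?_, ?_⟩
  · intro d hd
    by_cases hr : d ∈ Set.range (Sum.map θ θ)
    · obtain ⟨t, rfl⟩ := hr
      rw [Finsupp.mapDomain_apply hinj, Finsupp.mapDomain_apply hinj]
      exact hj t ((ordS_sumMap_lt hθ j t).mp hd)
    · rw [Finsupp.mapDomain_notin_range _ _ hr, Finsupp.mapDomain_notin_range _ _ hr]
  · rw [Finsupp.mapDomain_apply hinj, Finsupp.mapDomain_apply hinj]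
    exact hlt

/-! ### The WQO on monomial weights -/

def wle (n m : Mo) : Prop :=
  ∃ θ : ℕ → ℕ, StrictMono θ ∧
    ∀ i, n (Sum.inl i) ≤ m (Sum.inl (θ i)) ∧ n (Sum.inr i) ≤ m (Sum.inr (θ i))

def Npair (μ : Mo) : ℕ := (μ.support.sup (Sum.elim id id)) + 1

lemma apply_eq_zero_of_Npair_le (μ : Mo) {i : ℕ} (h : Npair μ ≤ i) :
    μ (Sum.inl i) = 0 ∧ μ (Sum.inr i) = 0 := by
  unfold Npair at h
  constructor
  · by_contra hc
    have hm : (Sum.inl i : ℕ ⊕ ℕ) ∈ μ.support := Finsupp.mem_support_iff.mpr hc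
    have h2 : i ≤ μ.support.sup (Sum.elim id id) := by
      simpa using Finset.le_sup (f := Sum.elim id id) hm
    omega
  · by_contra hc
    have hm : (Sum.inr i : ℕ ⊕ ℕ) ∈ μ.support := Finsupp.mem_support_iff.mpr hc
    have h2 : i ≤ μ.support.sup (Sum.elim id id) := by
      simpa using Finset.le_sup (f := Sum.elim id id) hm
    omega

noncomputable def Lof (μ : Mo) : List (ℕ × ℕ) :=
  (List.range (Npair μ)).map fun i => (μ (Sum.inl i), μ (Sum.inr i))

lemma Lof_getD (μ : Mo) (i : ℕ) :
    (Lof μ).getD i (0, 0) = (μ (Sum.inl i), μ (Sum.inr i)) := by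
  by_cases h : i < Npair μ
  · have hlen : i < (Lof μ).length := by
      simp [Lof, h]
    rw [List.getD_eq_getElem _ _ hlen]
    simp [Lof]
  · have hlen : (Lof μ).length ≤ i := by
      simp only [Lof, List.length_map, List.length_range]
      omega
    rw [List.getD_eq_default _ _ hlen]
    obtain ⟨h1, h2⟩ := apply_eq_zero_of_Npair_le μ (by omega : Npair μ ≤ i)
    rw [h1, h2]

lemma sublistForall₂_exists_strictMono {l₁ l₂ : List (ℕ × ℕ)}
    (h : List.SublistForall₂ (· ≤ ·) l₁ l₂) :
    ∃ θ : ℕ → ℕ, StrictMono θ ∧ ∀ i, l₁.getD i (0, 0) ≤ l₂.getD (θ i) (0, 0) := by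
  induction h with
  | nil =>
    refine ⟨id, strictMono_id, fun i => ?_⟩
    simp only [List.getD]
    exact ⟨Nat.zero_le _, Nat.zero_le _⟩
  | @cons a b t₁ t₂ hab _ ih =>
    obtain ⟨θ, hθ, hle⟩ := ih
    refine ⟨fun k => Nat.casesOn k 0 (fun k' => θ k' + 1), ?_, ?_⟩
    · apply strictMono_nat_of_lt_succ
      intro k
      cases k with
      | zero => exact Nat.succ_pos _
      | succ k => exact Nat.succ_lt_succ (hθ (Nat.lt_succ_self k))
    · intro i
      cases i with
      | zero => simpa using hab
      | succ i => simpa using hle i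
  | @cons_right b t₁ t₂ _ ih =>
    obtain ⟨θ, hθ, hle⟩ := ih
    exact ⟨fun k => θ k + 1, fun x y hxy => Nat.succ_lt_succ (hθ hxy),
      fun i => by simpa using hle i⟩

lemma pwo_nat2 : (Set.univ : Set (ℕ × ℕ)).IsPWO := by
  have h1 : (Set.univ : Set ℕ).IsPWO := (Set.isWF_univ_iff.mpr (inferInstance : WellFoundedLT ℕ)).isPWO
  simpa [Set.univ_prod_univ] using h1.prod h1

lemma wle_seq (f : ℕ → Mo) : ∃ i j, i < j ∧ wle (f i) (f j) := by
  have hH := Set.PartiallyWellOrderedOn.partiallyWellOrderedOn_sublistForall₂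
    ((· ≤ ·) : ℕ × ℕ → ℕ × ℕ → Prop) pwo_nat2
  obtain ⟨i, j, hij, hsl⟩ := hH.exists_lt (f := fun k => Lof (f k)) (fun k => by intro x hx; trivial)
  obtain ⟨θ, hθ, hle⟩ := sublistForall₂_exists_strictMono hsl
  refine ⟨i, j, hij, θ, hθ, fun k => ?_⟩
  have h2 := hle k
  rw [Lof_getD, Lof_getD] at h2
  exact ⟨h2.1, h2.2⟩

/-! ### Extracting a finite basis from a PWO -/

section Basis
variable {α : Type} [DecidableEq α] (s : Set α) (r : α → α → Prop)

noncomputable def badList (h : ∀ B : Finset α, ∃ m, m ∈ s ∧ ∀ b ∈ B, b ∈ s → ¬ r b m) :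
    ℕ → List α
  | 0 => []
  | n + 1 => badList h n ++ [Classical.choose (h (badList h n).toFinset)]

noncomputable def badSeq (h : ∀ B : Finset α, ∃ m, m ∈ s ∧ ∀ b ∈ B, b ∈ s → ¬ r b m)
    (n : ℕ) : α :=
  Classical.choose (h (badList s r h n).toFinset)

lemma badList_eq (h : ∀ B : Finset α, ∃ m, m ∈ s ∧ ∀ b ∈ B, b ∈ s → ¬ r b m) (n : ℕ) :
    badList s r h n = (List.range n).map (badSeq s r h) := by
  induction n with
  | zero => rfl
  | succ n ih =>
    rw [badList, List.range_succ, List.map_append]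
    exact congrArg₂ (· ++ ·) ih rfl

lemma badSeq_mem (h : ∀ B : Finset α, ∃ m, m ∈ s ∧ ∀ b ∈ B, b ∈ s → ¬ r b m) (n : ℕ) :
    badSeq s r h n ∈ s :=
  (Classical.choose_spec (h (badList s r h n).toFinset)).1

lemma badSeq_not (h : ∀ B : Finset α, ∃ m, m ∈ s ∧ ∀ b ∈ B, b ∈ s → ¬ r b m)
    {k n : ℕ} (hk : k < n) : ¬ r (badSeq s r h k) (badSeq s r h n) := by
  refine (Classical.choose_spec (h (badList s r h n).toFinset)).2 _ ?_ (badSeq_mem s r h k)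
  rw [List.mem_toFinset, badList_eq]
  exact List.mem_map.mpr ⟨k, List.mem_range.mpr hk, rfl⟩

lemma exists_basis {s : Set α} {r : α → α → Prop}
    (hpwo : ∀ f : ℕ → α, (∀ n, f n ∈ s) → ∃ i j, i < j ∧ r (f i) (f j)) :
    ∃ B : Finset α, ↑B ⊆ s ∧ ∀ m ∈ s, ∃ b ∈ B, r b m := by
  classical
  by_contra hc
  push_neg at hc
  have h : ∀ B : Finset α, ∃ m, m ∈ s ∧ ∀ b ∈ B, b ∈ s → ¬ r b m := by
    intro B
    obtain ⟨m, hm, hb⟩ := hc (B.filter (fun x => x ∈ s))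
      (by intro x hx; exact (Finset.mem_filter.mp hx).2)
    exact ⟨m, hm, fun b hbB hbs => hb b (Finset.mem_filter.mpr ⟨hbB, hbs⟩)⟩
  obtain ⟨i, j, hij, hr⟩ := hpwo (badSeq s r h) (badSeq_mem s r h)
  exact badSeq_not s r h hij hr

end Basis

/-! ### The core finiteness lemma -/

section Core


def GoodW (W : Set (MvPolynomial (ℕ ⊕ ℕ) K)) : Prop :=
  (0 : MvPolynomial (ℕ ⊕ ℕ) K) ∈ W ∧
  (∀ p ∈ W, ∀ q ∈ W, p + q ∈ W) ∧
  (∀ (c : K), ∀ p ∈ W, c • p ∈ W) ∧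
  (∀ (μ : Mo), ∀ p ∈ W, monomial μ (1 : K) * p ∈ W) ∧
  (∀ θ : ℕ → ℕ, StrictMono θ → ∀ p ∈ W, rename (Sum.map θ θ) p ∈ W)

lemma mapDomain_le_of_wle {θ : ℕ → ℕ} (hθ : StrictMono θ) {n m : Mo}
    (hw : ∀ i, n (Sum.inl i) ≤ m (Sum.inl (θ i)) ∧ n (Sum.inr i) ≤ m (Sum.inr (θ i))) :
    Finsupp.mapDomain (Sum.map θ θ) n ≤ m := by
  classical
  refine Finsupp.le_def.mpr fun s => ?_
  by_cases hr : s ∈ Set.range (Sum.map θ θ)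
  · obtain ⟨t, rfl⟩ := hr
    rw [Finsupp.mapDomain_apply (sumMap_inj hθ.injective)]
    rcases t with i | i
    · exact (hw i).1
    · exact (hw i).2
  · rw [Finsupp.mapDomain_notin_range _ _ hr]
    exact Nat.zero_le _

lemma core {W : Set (MvPolynomial (ℕ ⊕ ℕ) K)} (hW : GoodW K W) :
    ∃ F : Finset (MvPolynomial (ℕ ⊕ ℕ) K), ↑F ⊆ W ∧
      ∀ W' : Set (MvPolynomial (ℕ ⊕ ℕ) K), GoodW K W' → ↑F ⊆ W' → W ⊆ W' := by
  classical
  obtain ⟨hW0, hWadd, hWsmul, hWmon, hWren⟩ := hW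
  set D : Set Mo := {m | ∃ p, p ∈ W ∧ coeff m p ≠ 0 ∧ ∀ ν ∈ p.support, ν ≠ m → mlt ν m}
    with hD
  obtain ⟨B, hBD, hBbasis⟩ := exists_basis (s := D) (r := wle) (fun f _ => wle_seq f)
  have hpick : ∀ b ∈ B, ∃ p, p ∈ W ∧ coeff b p ≠ 0 ∧ ∀ ν ∈ p.support, ν ≠ b → mlt ν b :=
    fun b hb => hBD hb
  choose pick hpickW hpickc hpickmax using hpick
  refine ⟨B.attach.image (fun b => pick b.1 b.2), ?_, ?_⟩
  · intro g hg
    simp only [Finset.coe_image, Set.mem_image, Finset.mem_coe, Finset.mem_attach] at hg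
    obtain ⟨b, _, rfl⟩ := hg
    exact hpickW b.1 b.2
  intro W' hW' hFW'
  obtain ⟨hW'0, hW'add, hW'smul, hW'mon, hW'ren⟩ := hW'
  have hFW'' : ∀ b (hb : b ∈ B), pick b hb ∈ W' := by
    intro b hb
    exact hFW' (Finset.mem_coe.mpr
      (Finset.mem_image.mpr ⟨⟨b, hb⟩, Finset.mem_attach _ _, rfl⟩))
  have main : ∀ m : Mo, ∀ p, p ∈ W → (∀ ν ∈ p.support, ν = m ∨ mlt ν m) → p ∈ W' := by
    refine fun m => mlt_wf.induction
      (C := fun m => ∀ p, p ∈ W → (∀ ν ∈ p.support, ν = m ∨ mlt ν m) → p ∈ W') m ?_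
    intro m IH p hpW hsupp
    by_cases hc : coeff m p = 0
    · rcases eq_or_ne p 0 with rfl | hp0
      · exact hW'0
      · obtain ⟨m₁, hm₁, hmax₁⟩ := exists_mlt_max p.support
          (Finset.nonempty_iff_ne_empty.mpr (fun h0 => hp0 (support_eq_empty.mp h0)))
        have hm₁lt : mlt m₁ m := by
          rcases hsupp m₁ hm₁ with rfl | h1
          · exact absurd (mem_support_iff.mp hm₁) (not_not.mpr hc)
          · exact h1
        exact IH m₁ hm₁lt p hpW
          (fun ν hν => if heq : ν = m₁ then Or.inl heq else Or.inr (hmax₁ ν hν heq))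
    · have hmD : m ∈ D := ⟨p, hpW, hc, fun ν hν hne => (hsupp ν hν).resolve_left hne⟩
      obtain ⟨b, hbB, hble⟩ := hBbasis m hmD
      obtain ⟨θ, hθ, hw⟩ := hble
      have hinj := sumMap_inj hθ.injective
      set f := pick b hbB with hfdef
      set ρb := Finsupp.mapDomain (Sum.map θ θ) b with hρb
      have hle : ρb ≤ m := mapDomain_le_of_wle hθ hw
      set μ := m - ρb with hμdef
      have hμ : μ + ρb = m := tsub_add_cancel_of_le hle
      set hel := monomial μ (1 : K) * rename (Sum.map θ θ) f with hheldef
      have hhW' : hel ∈ W' := hW'mon μ _ (hW'ren θ hθ f (hFW'' b hbB))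
      have hhW : hel ∈ W := hWmon μ _ (hWren θ hθ f (hpickW b hbB))
      have hmsubμ : m - μ = ρb := by
        rw [← hμ, add_tsub_cancel_left]
      have hcoeffh : coeff m hel = coeff b f := by
        rw [hheldef, coeff_monomial_mul', if_pos tsub_le_self, hmsubμ, one_mul,
          hρb, coeff_rename_mapDomain _ hinj]
      have hsupph : ∀ ν ∈ hel.support, ν = m ∨ mlt ν m := by
        intro ν hν
        have hcν : coeff ν hel ≠ 0 := mem_support_iff.mp hν
        rw [hheldef, coeff_monomial_mul'] at hcν
        by_cases hμν : μ ≤ ν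
        · rw [if_pos hμν, one_mul] at hcν
          have hmem : ν - μ ∈ (rename (Sum.map θ θ) f).support := mem_support_iff.mpr hcν
          rw [support_rename_of_injective hinj] at hmem
          obtain ⟨ν', hν', hρν'⟩ := Finset.mem_image.mp hmem
          have hνeq : ν = μ + Finsupp.mapDomain (Sum.map θ θ) ν' := by
            rw [hρν']
            exact ((tsub_add_cancel_of_le hμν).symm.trans (add_comm _ _))
          rcases eq_or_ne ν' b with rfl | hne
          · exact Or.inl (hνeq.trans hμ)
          · refine Or.inr ?_
            rw [hνeq, ← hμ]
            exact mlt_add_left μ (mlt_mapDomain hθ (hpickmax b hbB ν' hν' hne))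
        · rw [if_neg hμν] at hcν
          exact absurd rfl hcν
      have hbf : coeff b f ≠ 0 := hpickc b hbB
      set c := coeff m p * (coeff b f)⁻¹ with hcdef
      set q := p + (-c) • hel with hqdef
      have hqW : q ∈ W := hWadd p hpW _ (hWsmul _ _ hhW)
      have hqm : coeff m q = 0 := by
        rw [hqdef, coeff_add, coeff_smul, hcoeffh, smul_eq_mul, hcdef]
        field_simp
        ring
      have hqsupp : ∀ ν ∈ q.support, mlt ν m := by
        intro ν hν
        have hcν := mem_support_iff.mp hν
        have hνm : ν ≠ m := by
          intro h1
          rw [h1] at hcν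
          exact hcν hqm
        have h2 : coeff ν p ≠ 0 ∨ coeff ν hel ≠ 0 := by
          by_contra hb2
          push_neg at hb2
          apply hcν
          rw [hqdef, coeff_add, coeff_smul, hb2.1, hb2.2, smul_eq_mul, mul_zero, add_zero]
        rcases h2 with h1 | h1
        · exact (hsupp ν (mem_support_iff.mpr h1)).resolve_left hνm
        · exact (hsupph ν (mem_support_iff.mpr h1)).resolve_left hνm
      have hqW' : q ∈ W' := by
        rcases eq_or_ne q 0 with hq0 | hq0
        · rw [hq0]; exact hW'0
        · obtain ⟨m₂, hm₂, hmax₂⟩ := exists_mlt_max q.support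
            (Finset.nonempty_iff_ne_empty.mpr (fun h0 => hq0 (support_eq_empty.mp h0)))
          exact IH m₂ (hqsupp m₂ hm₂) q hqW
            (fun ν hν => if heq : ν = m₂ then Or.inl heq else Or.inr (hmax₂ ν hν heq))
      have hp : q + c • hel = p := by
        rw [hqdef, add_assoc, ← add_smul, neg_add_cancel, zero_smul, add_zero]
      rw [← hp]
      exact hW'add q hqW' _ (hW'smul c hel hhW')
  intro p hpW
  rcases eq_or_ne p 0 with rfl | hp0
  · exact hW'0
  · obtain ⟨m, hm, hmax⟩ := exists_mlt_max p.support
      (Finset.nonempty_iff_ne_empty.mpr (fun h0 => hp0 (support_eq_empty.mp h0)))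
    exact main m p hpW
      (fun ν hν => if heq : ν = m then Or.inl heq else Or.inr (hmax ν hν heq))

end Core

end SpechtAux

/-! ### The algebra side -/

lemma GA_ext {x y : GA K ℕ} (h1 : x.1 = y.1)
    (h2 : (x.2 : MvPolynomial (ℕ ⊕ ℕ) K) = (y.2 : MvPolynomial (ℕ ⊕ ℕ) K)) : x = y :=
  Prod.ext h1 (Subtype.ext h2)

lemma mul_fst (a b : GA K ℕ) : (a * b).1 = 0 := rfl

lemma mul_snd (a b : GA K ℕ) : ((a * b).2 : MvPolynomial (ℕ ⊕ ℕ) K)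
    = (Yp K ℕ a.1 + (a.2 : MvPolynomial (ℕ ⊕ ℕ) K)) *
      (Zp K ℕ b.1 + (b.2 : MvPolynomial (ℕ ⊕ ℕ) K)) := rfl

lemma Yp_zero : Yp K ℕ 0 = 0 := Finsupp.sum_zero_index

lemma Zp_zero : Zp K ℕ 0 = 0 := Finsupp.sum_zero_index

lemma Yp_add (a b : ℕ →₀ K) : Yp K ℕ (a + b) = Yp K ℕ a + Yp K ℕ b :=
  Finsupp.sum_add_index' (fun i => by simp) (fun i b₁ b₂ => by rw [map_add, add_mul])

lemma Zp_add (a b : ℕ →₀ K) : Zp K ℕ (a + b) = Zp K ℕ a + Zp K ℕ b :=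
  Finsupp.sum_add_index' (fun i => by simp) (fun i b₁ b₂ => by rw [map_add, add_mul])

lemma Yp_single (i : ℕ) (c : K) :
    Yp K ℕ (Finsupp.single i c) = C c * X (Sum.inl i) :=
  Finsupp.sum_single_index (by simp)

lemma Zp_single (i : ℕ) (c : K) :
    Zp K ℕ (Finsupp.single i c) = C c * X (Sum.inr i) :=
  Finsupp.sum_single_index (by simp)

lemma Yp_smul (c : K) (a : ℕ →₀ K) : Yp K ℕ (c • a) = C c * Yp K ℕ a := by
  rw [Yp, Yp, Finsupp.sum_smul_index' (fun i => by simp), Finsupp.mul_sum]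
  congr 1
  funext i d
  rw [smul_eq_mul, map_mul, mul_assoc]

lemma Zp_smul (c : K) (a : ℕ →₀ K) : Zp K ℕ (c • a) = C c * Zp K ℕ a := by
  rw [Zp, Zp, Finsupp.sum_smul_index' (fun i => by simp), Finsupp.mul_sum]
  congr 1
  funext i d
  rw [smul_eq_mul, map_mul, mul_assoc]

/-- The algebra endomorphism of `K[Y,Z]` induced by the substitution `x_i ↦ g i`. -/
noncomputable def subPoly (g : ℕ → GA K ℕ) :
    MvPolynomial (ℕ ⊕ ℕ) K →ₐ[K] MvPolynomial (ℕ ⊕ ℕ) K :=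
  aeval (Sum.elim
    (fun i => Yp K ℕ (g i).1 + ((g i).2 : MvPolynomial (ℕ ⊕ ℕ) K))
    (fun i => Zp K ℕ (g i).1 + ((g i).2 : MvPolynomial (ℕ ⊕ ℕ) K)))

lemma subPoly_X_inl (g : ℕ → GA K ℕ) (i : ℕ) :
    subPoly K g (X (Sum.inl i)) = Yp K ℕ (g i).1 + ((g i).2 : MvPolynomial (ℕ ⊕ ℕ) K) := by
  rw [subPoly, aeval_X, Sum.elim_inl]

lemma subPoly_X_inr (g : ℕ → GA K ℕ) (i : ℕ) :
    subPoly K g (X (Sum.inr i)) = Zp K ℕ (g i).1 + ((g i).2 : MvPolynomial (ℕ ⊕ ℕ) K) := by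
  rw [subPoly, aeval_X, Sum.elim_inr]

lemma subPoly_mem_Vid (g : ℕ → GA K ℕ) {p : MvPolynomial (ℕ ⊕ ℕ) K}
    (hp : p ∈ Vid K ℕ) : subPoly K g p ∈ Vid K ℕ := by
  have h1 : subPoly K g p ∈ Ideal.map (subPoly K g) (Vid K ℕ) :=
    Ideal.mem_map_of_mem _ hp
  rw [Vid, Ideal.map_span] at h1
  refine Ideal.span_le.mpr ?_ h1
  rintro q ⟨q', ⟨i, j, rfl⟩, rfl⟩
  rw [map_mul, subPoly_X_inl, subPoly_X_inr]
  exact SetLike.mem_coe.mpr (mul_mem_Vid K ℕ _ _ _ _ (g i).2.2 (g j).2.2)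

/-- The linear part of a substitution. -/
noncomputable def Lp (g : ℕ → GA K ℕ) (u : ℕ →₀ K) : GA K ℕ :=
  u.sum fun i c => c • g i

lemma Lp_zero (g : ℕ → GA K ℕ) : Lp K g 0 = 0 := Finsupp.sum_zero_index

lemma Lp_add (g : ℕ → GA K ℕ) (u v : ℕ →₀ K) :
    Lp K g (u + v) = Lp K g u + Lp K g v :=
  Finsupp.sum_add_index' (fun i => zero_smul K (g i)) (fun i b₁ b₂ => add_smul b₁ b₂ (g i))

lemma Lp_single (g : ℕ → GA K ℕ) (i : ℕ) (c : K) :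
    Lp K g (Finsupp.single i c) = c • g i :=
  Finsupp.sum_single_index (zero_smul K (g i))

lemma Lp_smul (g : ℕ → GA K ℕ) (c : K) (u : ℕ →₀ K) :
    Lp K g (c • u) = c • Lp K g u := by
  rw [Lp, Finsupp.sum_smul_index' (fun i => zero_smul K (g i)), Lp, Finsupp.smul_sum]
  congr 1
  funext i d
  rw [smul_eq_mul, mul_smul]

lemma Lp_fst (g : ℕ → GA K ℕ) (u : ℕ →₀ K) :
    (Lp K g u).1 = u.sum fun i c => c • (g i).1 := by
  rw [Lp, Finsupp.sum, Finsupp.sum, Prod.fst_sum]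
  rfl

lemma Lp_snd (g : ℕ → GA K ℕ) (u : ℕ →₀ K) :
    ((Lp K g u).2 : MvPolynomial (ℕ ⊕ ℕ) K)
      = u.sum fun i c => c • ((g i).2 : MvPolynomial (ℕ ⊕ ℕ) K) := by
  rw [Lp, Finsupp.sum, Finsupp.sum, Prod.snd_sum, AddSubmonoidClass.coe_finset_sum]
  rfl

lemma subPoly_Yp (g : ℕ → GA K ℕ) (u : ℕ →₀ K) :
    subPoly K g (Yp K ℕ u)
      = Yp K ℕ (Lp K g u).1 + ((Lp K g u).2 : MvPolynomial (ℕ ⊕ ℕ) K) := by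
  induction u using Finsupp.induction_linear with
  | zero =>
      rw [Yp_zero, map_zero, Lp_zero]
      simp [Yp_zero]
  | add f f' hf hf' =>
      rw [Yp_add, map_add, hf, hf', Lp_add, Prod.fst_add, Yp_add, Prod.snd_add,
        Submodule.coe_add]
      ring
  | single i c =>
      rw [Yp_single, map_mul, subPoly_X_inl, Lp_single]
      have hC : subPoly K g (C c) = C c := by
        rw [subPoly, aeval_C, algebraMap_eq]
      rw [hC, mul_add]
      have h1 : (c • g i).1 = c • (g i).1 := rfl
      have h2 : ((c • g i).2 : MvPolynomial (ℕ ⊕ ℕ) K) = c • ((g i).2 : MvPolynomial (ℕ ⊕ ℕ) K) := rfl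
      rw [h1, h2, Yp_smul]
      simp only [C_mul']

lemma subPoly_Zp (g : ℕ → GA K ℕ) (u : ℕ →₀ K) :
    subPoly K g (Zp K ℕ u)
      = Zp K ℕ (Lp K g u).1 + ((Lp K g u).2 : MvPolynomial (ℕ ⊕ ℕ) K) := by
  induction u using Finsupp.induction_linear with
  | zero =>
      rw [Zp_zero, map_zero, Lp_zero]
      simp [Zp_zero]
  | add f f' hf hf' =>
      rw [Zp_add, map_add, hf, hf', Lp_add, Prod.fst_add, Zp_add, Prod.snd_add,
        Submodule.coe_add]
      ring
  | single i c =>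
      rw [Zp_single, map_mul, subPoly_X_inr, Lp_single]
      have hC : subPoly K g (C c) = C c := by
        rw [subPoly, aeval_C, algebraMap_eq]
      rw [hC, mul_add]
      have h1 : (c • g i).1 = c • (g i).1 := rfl
      have h2 : ((c • g i).2 : MvPolynomial (ℕ ⊕ ℕ) K) = c • ((g i).2 : MvPolynomial (ℕ ⊕ ℕ) K) := rfl
      rw [h1, h2, Zp_smul]
      simp only [C_mul']

/-- The endomorphism of `G` induced by the substitution `x_i ↦ g i`. -/
noncomputable def subFun (g : ℕ → GA K ℕ) (x : GA K ℕ) : GA K ℕ :=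
  Lp K g x.1 + (0, ⟨subPoly K g (x.2 : MvPolynomial (ℕ ⊕ ℕ) K), subPoly_mem_Vid K g x.2.2⟩)

lemma subFun_fst (g : ℕ → GA K ℕ) (x : GA K ℕ) :
    (subFun K g x).1 = (Lp K g x.1).1 := by
  show (Lp K g x.1).1 + 0 = _
  rw [add_zero]

lemma subFun_snd (g : ℕ → GA K ℕ) (x : GA K ℕ) :
    ((subFun K g x).2 : MvPolynomial (ℕ ⊕ ℕ) K)
      = ((Lp K g x.1).2 : MvPolynomial (ℕ ⊕ ℕ) K)
        + subPoly K g (x.2 : MvPolynomial (ℕ ⊕ ℕ) K) := rfl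

lemma subFun_mul (g : ℕ → GA K ℕ) (a b : GA K ℕ) :
    subFun K g (a * b) = subFun K g a * subFun K g b := by
  apply GA_ext
  · rw [subFun_fst, mul_fst, mul_fst, Lp_zero]
    rfl
  · rw [subFun_snd, mul_fst, Lp_zero, mul_snd, mul_snd]
    have hz : (((0 : GA K ℕ)).2 : MvPolynomial (ℕ ⊕ ℕ) K) = 0 := rfl
    rw [hz, zero_add]
    rw [map_mul, map_add, map_add, subPoly_Yp, subPoly_Zp]
    rw [subFun_fst, subFun_snd, subFun_fst, subFun_snd]
    ring

/-- The substitution endomorphism as a linear map. -/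
noncomputable def subEnd (g : ℕ → GA K ℕ) : GA K ℕ →ₗ[K] GA K ℕ where
  toFun := subFun K g
  map_add' x y := by
    apply GA_ext
    · rw [subFun_fst]
      have : (x + y).1 = x.1 + y.1 := rfl
      rw [this, Lp_add, Prod.fst_add]
      show _ = (subFun K g x).1 + (subFun K g y).1
      rw [subFun_fst, subFun_fst]
    · have h2 : ((x + y).2 : MvPolynomial (ℕ ⊕ ℕ) K)
          = (x.2 : MvPolynomial (ℕ ⊕ ℕ) K) + (y.2 : MvPolynomial (ℕ ⊕ ℕ) K) := rfl
      have h1 : (x + y).1 = x.1 + y.1 := rfl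
      have hr : ((subFun K g x + subFun K g y).2 : MvPolynomial (ℕ ⊕ ℕ) K)
          = ((subFun K g x).2 : MvPolynomial (ℕ ⊕ ℕ) K)
            + ((subFun K g y).2 : MvPolynomial (ℕ ⊕ ℕ) K) := rfl
      rw [subFun_snd, h1, h2, Lp_add, map_add, hr, subFun_snd, subFun_snd]
      have hl : ((Lp K g x.1 + Lp K g y.1).2 : MvPolynomial (ℕ ⊕ ℕ) K)
          = ((Lp K g x.1).2 : MvPolynomial (ℕ ⊕ ℕ) K)
            + ((Lp K g y.1).2 : MvPolynomial (ℕ ⊕ ℕ) K) := rfl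
      rw [hl]
      ring
  map_smul' c x := by
    apply GA_ext
    · rw [subFun_fst]
      have h1 : (c • x).1 = c • x.1 := rfl
      rw [h1, Lp_smul]
      show (c • Lp K g x.1).1 = (RingHom.id K c • subFun K g x).1
      have h2 : (c • Lp K g x.1).1 = c • (Lp K g x.1).1 := rfl
      rw [h2]
      show _ = c • (subFun K g x).1
      rw [subFun_fst]
    · have h1 : (c • x).1 = c • x.1 := rfl
      have h2 : ((c • x).2 : MvPolynomial (ℕ ⊕ ℕ) K) = c • (x.2 : MvPolynomial (ℕ ⊕ ℕ) K) := rfl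
      rw [subFun_snd, h1, h2, Lp_smul, map_smul]
      show _ = ((RingHom.id K c • subFun K g x).2 : MvPolynomial (ℕ ⊕ ℕ) K)
      have hr : ((RingHom.id K c • subFun K g x).2 : MvPolynomial (ℕ ⊕ ℕ) K)
          = c • ((subFun K g x).2 : MvPolynomial (ℕ ⊕ ℕ) K) := rfl
      rw [hr, subFun_snd]
      have hl : ((c • Lp K g x.1).2 : MvPolynomial (ℕ ⊕ ℕ) K)
          = c • ((Lp K g x.1).2 : MvPolynomial (ℕ ⊕ ℕ) K) := rfl
      rw [hl, smul_add]

lemma subEnd_mem {S : Submodule K (GA K ℕ)} (hS : IsTIdeal K S) (g : ℕ → GA K ℕ)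
    {x : GA K ℕ} (hx : x ∈ S) : subFun K g x ∈ S :=
  hS.2 (subEnd K g) (fun a b => subFun_mul K g a b) x hx

/-! ### `Wof` and its closure properties -/

/-- The set of polynomials `p` such that `(0, p)` belongs to `S`. -/
def Wof (S : Submodule K (GA K ℕ)) : Set (MvPolynomial (ℕ ⊕ ℕ) K) :=
  {p | ∃ h : p ∈ Vid K ℕ, ((0, ⟨p, h⟩) : GA K ℕ) ∈ S}

lemma Wof_zero (S : Submodule K (GA K ℕ)) : (0 : MvPolynomial (ℕ ⊕ ℕ) K) ∈ Wof K S := by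
  refine ⟨(Vid K ℕ).zero_mem, ?_⟩
  have h : ((0, ⟨0, (Vid K ℕ).zero_mem⟩) : GA K ℕ) = 0 := GA_ext K rfl rfl
  rw [h]
  exact S.zero_mem

lemma Wof_add (S : Submodule K (GA K ℕ)) :
    ∀ p ∈ Wof K S, ∀ q ∈ Wof K S, p + q ∈ Wof K S := by
  rintro p ⟨hp, hpm⟩ q ⟨hq, hqm⟩
  refine ⟨add_mem hp hq, ?_⟩
  have h : ((0, ⟨p + q, add_mem hp hq⟩) : GA K ℕ)
      = ((0, ⟨p, hp⟩) : GA K ℕ) + ((0, ⟨q, hq⟩) : GA K ℕ) :=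
    GA_ext K (by simp) rfl
  rw [h]
  exact S.add_mem hpm hqm

lemma Wof_smul (S : Submodule K (GA K ℕ)) (c : K) :
    ∀ p ∈ Wof K S, c • p ∈ Wof K S := by
  rintro p ⟨hp, hpm⟩
  have hcp : c • p ∈ Vid K ℕ := by
    rw [← C_mul']
    exact Ideal.mul_mem_left _ _ hp
  refine ⟨hcp, ?_⟩
  have h : ((0, ⟨c • p, hcp⟩) : GA K ℕ)
      = c • ((0, ⟨p, hp⟩) : GA K ℕ) :=
    GA_ext K (by simp) rfl
  rw [h]
  exact S.smul_mem c hpm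

lemma xE_mul_v (i : ℕ) {p : MvPolynomial (ℕ ⊕ ℕ) K} (hp : p ∈ Vid K ℕ) :
    xE K ℕ i * ((0, ⟨p, hp⟩) : GA K ℕ)
      = (0, ⟨X (Sum.inl i) * p, Ideal.mul_mem_left _ _ hp⟩) := by
  apply GA_ext K
  · rfl
  · rw [mul_snd]
    simp [xE, Yp_single, Zp_zero]

lemma v_mul_xE (i : ℕ) {p : MvPolynomial (ℕ ⊕ ℕ) K} (hp : p ∈ Vid K ℕ) :
    ((0, ⟨p, hp⟩) : GA K ℕ) * xE K ℕ i
      = (0, ⟨X (Sum.inr i) * p, Ideal.mul_mem_left _ _ hp⟩) := by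
  apply GA_ext K
  · rfl
  · rw [mul_snd]
    simp [xE, Zp_single, Yp_zero]
    ring

lemma Wof_X (S : Submodule K (GA K ℕ)) (hS : IsTIdeal K S) (s : ℕ ⊕ ℕ) :
    ∀ p ∈ Wof K S, X s * p ∈ Wof K S := by
  rintro p ⟨hp, hpm⟩
  rcases s with i | i
  · have h2 := (hS.1 (xE K ℕ i) _ hpm).1
    rw [xE_mul_v K i hp] at h2
    exact ⟨_, h2⟩
  · have h2 := (hS.1 (xE K ℕ i) _ hpm).2
    rw [v_mul_xE K i hp] at h2
    exact ⟨_, h2⟩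

lemma Wof_Xpow (S : Submodule K (GA K ℕ)) (hS : IsTIdeal K S) (s : ℕ ⊕ ℕ) (k : ℕ) :
    ∀ p ∈ Wof K S, X s ^ k * p ∈ Wof K S := by
  induction k with
  | zero => intro p hp; rw [pow_zero, one_mul]; exact hp
  | succ k ih =>
    intro p hp
    have h : X s ^ (k + 1) * p = X s * (X s ^ k * p) := by ring
    rw [h]
    exact Wof_X K S hS s _ (ih p hp)

lemma Wof_monomial (S : Submodule K (GA K ℕ)) (hS : IsTIdeal K S) (μ : SpechtAux.Mo) :
    ∀ p ∈ Wof K S, monomial μ (1 : K) * p ∈ Wof K S := by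
  induction μ using Finsupp.induction with
  | zero =>
    intro p hp
    rw [monomial_zero', C_1, one_mul]
    exact hp
  | single_add s k μ hs hk ih =>
    intro p hp
    have h : monomial (Finsupp.single s k + μ) (1 : K)
        = X s ^ k * monomial μ (1 : K) := by
      rw [X_pow_eq_monomial, monomial_mul, one_mul]
    rw [h, mul_assoc]
    exact Wof_Xpow K S hS s k _ (ih p hp)

lemma Wof_rename (S : Submodule K (GA K ℕ)) (hS : IsTIdeal K S)
    (θ : ℕ → ℕ) (hθ : StrictMono θ) :
    ∀ p ∈ Wof K S, rename (Sum.map θ θ) p ∈ Wof K S := by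
  rintro p ⟨hp, hpm⟩
  set g : ℕ → GA K ℕ := fun k => xE K ℕ (θ k) with hg
  have hσ : subPoly K g = (rename (Sum.map θ θ) :
      MvPolynomial (ℕ ⊕ ℕ) K →ₐ[K] MvPolynomial (ℕ ⊕ ℕ) K) := by
    apply algHom_ext
    rintro (i | i)
    · rw [subPoly_X_inl, rename_X]
      simp [hg, xE, Yp_single]
    · rw [subPoly_X_inr, rename_X]
      simp [hg, xE, Zp_single]
  have hren : rename (Sum.map θ θ) p ∈ Vid K ℕ := by
    have h3 := subPoly_mem_Vid K g hp
    rwa [DFunLike.congr_fun hσ p] at h3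
  have h2 := subEnd_mem K hS g hpm
  have he : subFun K g ((0, ⟨p, hp⟩) : GA K ℕ)
      = (0, ⟨rename (Sum.map θ θ) p, hren⟩) := by
    apply GA_ext K
    · rw [subFun_fst]
      show (Lp K g 0).1 = 0
      rw [Lp_zero]
      rfl
    · rw [subFun_snd]
      show ((Lp K g 0).2 : MvPolynomial (ℕ ⊕ ℕ) K) + subPoly K g p = _
      rw [Lp_zero, DFunLike.congr_fun hσ p]
      show (((0 : GA K ℕ)).2 : MvPolynomial (ℕ ⊕ ℕ) K) + _ = _
      rw [show (((0 : GA K ℕ)).2 : MvPolynomial (ℕ ⊕ ℕ) K) = 0 from rfl, zero_add]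
  rw [he] at h2
  exact ⟨hren, h2⟩

lemma GoodW_Wof (S : Submodule K (GA K ℕ)) (hS : IsTIdeal K S) :
    SpechtAux.GoodW K (Wof K S) :=
  ⟨Wof_zero K S, Wof_add K S, Wof_smul K S,
    fun μ => Wof_monomial K S hS μ, fun θ hθ => Wof_rename K S hS θ hθ⟩

/-! ### T-ideal generation -/

lemma isTIdeal_TIdealGen (T : Set (GA K ℕ)) : IsTIdeal K (TIdealGen K T) := by
  constructor
  · intro a x hx
    constructor
    · rw [TIdealGen, Submodule.mem_sInf] at hx ⊢
      intro J hJ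
      exact (hJ.1.1 a x (hx J hJ)).1
    · rw [TIdealGen, Submodule.mem_sInf] at hx ⊢
      intro J hJ
      exact (hJ.1.1 a x (hx J hJ)).2
  · intro e he x hx
    rw [TIdealGen, Submodule.mem_sInf] at hx ⊢
    intro J hJ
    exact hJ.1.2 e he x (hx J hJ)

lemma subset_TIdealGen (T : Set (GA K ℕ)) : T ⊆ ↑(TIdealGen K T) := by
  intro x hx
  rw [SetLike.mem_coe, TIdealGen, Submodule.mem_sInf]
  intro J hJ
  exact hJ.2 hx

lemma TIdealGen_le {T : Set (GA K ℕ)} {I : Submodule K (GA K ℕ)}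
    (hI : IsTIdeal K I) (hT : T ⊆ ↑I) : TIdealGen K T ≤ I :=
  sInf_le ⟨hI, hT⟩

/-- The Specht property for bicommutative algebras: over an arbitrary field `K`,
every T-ideal of the free bicommutative algebra of countable rank is finitely
generated as a T-ideal; consequently every variety of bicommutative algebras over
`K` is defined by finitely many polynomial identities. -/
theorem specht_property_bicommutative :
    ∀ I : Submodule K (GA K ℕ), IsTIdeal K I →
      ∃ T : Finset (GA K ℕ), I = TIdealGen K ↑T := by
  intro I hI
  classical
  obtain ⟨F, hFW, hFmain⟩ := SpechtAux.core K (GoodW_Wof K I hI)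
  set TF : Finset (GA K ℕ) := F.attach.image
    (fun f => ((0, ⟨f.1, (hFW (Finset.mem_coe.mpr f.2)).choose⟩) : GA K ℕ)) with hTFdef
  have hTFI : ↑TF ⊆ (I : Set (GA K ℕ)) := by
    intro x hx
    obtain ⟨f, -, rfl⟩ := Finset.mem_image.mp (Finset.mem_coe.mp hx)
    exact (hFW (Finset.mem_coe.mpr f.2)).choose_spec
  have key : ∀ T : Set (GA K ℕ), ↑TF ⊆ T →
      ∀ z ∈ I, z.1 = 0 → z ∈ TIdealGen K T := by
    intro T hTT z hzI hz1
    have hJT : IsTIdeal K (TIdealGen K T) := isTIdeal_TIdealGen K T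
    have hFWJ : ↑F ⊆ Wof K (TIdealGen K T) := by
      intro f hf
      have hmemTF : ((0, ⟨f, (hFW hf).choose⟩) : GA K ℕ) ∈ TF := by
        rw [hTFdef]
        exact Finset.mem_image.mpr ⟨⟨f, Finset.mem_coe.mp hf⟩, Finset.mem_attach _ _, rfl⟩
      exact ⟨(hFW hf).choose, subset_TIdealGen K T (hTT hmemTF)⟩
    have hsub : Wof K I ⊆ Wof K (TIdealGen K T) :=
      hFmain (Wof K (TIdealGen K T)) (GoodW_Wof K _ hJT) hFWJ
    have hzW : ((z.2 : MvPolynomial (ℕ ⊕ ℕ) K)) ∈ Wof K I := by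
      refine ⟨z.2.2, ?_⟩
      have he : ((0, ⟨(z.2 : MvPolynomial (ℕ ⊕ ℕ) K), z.2.2⟩) : GA K ℕ) = z :=
        GA_ext K hz1.symm rfl
      rw [he]
      exact hzI
    obtain ⟨h', hm⟩ := hsub hzW
    have he : ((0, ⟨(z.2 : MvPolynomial (ℕ ⊕ ℕ) K), h'⟩) : GA K ℕ) = z :=
      GA_ext K hz1.symm rfl
    rw [← he]
    exact hm
  by_cases hL : ∀ x ∈ I, x.1 = (0 : ℕ →₀ K)
  · refine ⟨TF, le_antisymm ?_ (TIdealGen_le K hI hTFI)⟩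
    intro z hz
    exact key ↑TF (subset_refl _) z hz (hL z hz)
  · push_neg at hL
    obtain ⟨x₀, hx₀I, hx₀1⟩ := hL
    obtain ⟨i₀, hi₀⟩ : ∃ i, x₀.1 i ≠ 0 := by
      by_contra hcon
      push_neg at hcon
      exact hx₀1 (Finsupp.ext hcon)
    set g₀ : ℕ → GA K ℕ := fun k => if k = i₀ then (x₀.1 i₀)⁻¹ • xE K ℕ 1 else 0 with hg₀
    set fhat := subFun K g₀ x₀ with hfhatdef
    have hfhatI : fhat ∈ I := subEnd_mem K hI g₀ hx₀I
    have hfhat1 : fhat.1 = Finsupp.single 1 1 := by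
      rw [hfhatdef, subFun_fst, Lp_fst]
      have hsum := Finsupp.sum_eq_single (f := x₀.1)
        (g := fun i c => c • (g₀ i).1) i₀
        (fun b hb hbne => by
          rw [hg₀]
          simp only [if_neg hbne]
          show x₀.1 b • ((0 : GA K ℕ)).1 = 0
          simp)
        (fun _ => by simp)
      rw [hsum, hg₀]
      simp only [if_pos rfl]
      show x₀.1 i₀ • ((x₀.1 i₀)⁻¹ • xE K ℕ 1).1 = _
      have h1 : ((x₀.1 i₀)⁻¹ • xE K ℕ 1).1 = (x₀.1 i₀)⁻¹ • (Finsupp.single 1 (1 : K)) := rfl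
      rw [h1, smul_smul, mul_inv_cancel₀ hi₀, one_smul]
    refine ⟨insert fhat TF, ?_⟩
    have hT2I : ↑(insert fhat TF) ⊆ (I : Set (GA K ℕ)) := by
      intro x hx
      rcases Set.mem_insert_iff.mp (by rwa [Finset.coe_insert] at hx) with rfl | hx'
      · exact hfhatI
      · exact hTFI hx'
    refine le_antisymm ?_ (TIdealGen_le K hI hT2I)
    intro x hxI
    have hJT : IsTIdeal K (TIdealGen K ↑(insert fhat TF)) := isTIdeal_TIdealGen K _
    have hfhatJ : fhat ∈ TIdealGen K ↑(insert fhat TF) :=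
      subset_TIdealGen K _ (by rw [Finset.coe_insert]; exact Set.mem_insert _ _)
    set g₁ : ℕ → GA K ℕ := fun k => if k = 1 then ((x.1, 0) : GA K ℕ) else 0 with hg₁
    set y := subFun K g₁ fhat with hydef
    have hyJ : y ∈ TIdealGen K ↑(insert fhat TF) := subEnd_mem K hJT g₁ hfhatJ
    have hyI : y ∈ I := subEnd_mem K hI g₁ hfhatI
    have hy1 : y.1 = x.1 := by
      rw [hydef, subFun_fst, Lp_fst, hfhat1]
      rw [Finsupp.sum_single_index (by simp)]
      rw [hg₁]
      simp only [if_pos rfl]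
      show (1 : K) • ((x.1, (0 : ↥(Vid K ℕ))) : GA K ℕ).1 = x.1
      simp
    have hzI : x - y ∈ I := I.sub_mem hxI hyI
    have hz1 : (x - y).1 = 0 := by
      show x.1 - y.1 = 0
      rw [hy1, sub_self]
    have hzJ : x - y ∈ TIdealGen K ↑(insert fhat TF) :=
      key ↑(insert fhat TF)
        (by rw [Finset.coe_insert]; exact Set.subset_insert _ _) _ hzI hz1
    have hx : x = (x - y) + y := (sub_add_cancel x y).symm
    rw [hx]
    exact (TIdealGen K ↑(insert fhat TF)).add_mem hzJ hyJ
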